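/- Let L be a symmetric positive semidefinite d×d real matrix and let S be a proper sampling on {1,…,d} with matrices P̄ and P̃. Then P̃ ∘ L is symmetric positive semidefinite (equivalently P̄ ∘ L ⪰ L in the Loewner order), and λmax(L) ≤ λmax(P̄ ∘ L) ≤ λmax(L) + λmax(P̃ ∘ L). -/

import Mathlib

open scoped BigOperators RealInnerProductSpace
open Matrix

noncomputable section

/-- A proper sampling on `{1,…,d}`: a finitely supported probability distribution over
subsets of `Fin d` whose marginal probabilities are all positive. -/
structure Sampling (d : ℕ) where
  prob : Finset (Fin d) → ℝ
  nonneg : ∀ S, 0 ≤ prob S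
  total : ∑ S : Finset (Fin d), prob S = 1
  margPos : ∀ j : Fin d, 0 < ∑ S : Finset (Fin d), if j ∈ S then prob S else 0

namespace Sampling

variable {d : ℕ} (μ : Sampling d)

/-- Marginal probability `p_j = Prob(j ∈ S)`. -/
def marg (j : Fin d) : ℝ := ∑ S : Finset (Fin d), if j ∈ S then μ.prob S else 0

/-- Probability matrix `P`, with entries `p_{jl} = Prob({j,l} ⊆ S)`. -/
def probMatrix : Matrix (Fin d) (Fin d) ℝ :=
  Matrix.of fun j l => ∑ S : Finset (Fin d), if j ∈ S ∧ l ∈ S then μ.prob S else 0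

/-- The matrix `P̄` with entries `p_{jl}/(p_j p_l)`. -/
def Pbar : Matrix (Fin d) (Fin d) ℝ :=
  Matrix.of fun j l => μ.probMatrix j l / (μ.marg j * μ.marg l)

/-- The matrix `P̃ = P̄ − E` where `E` is the all-ones matrix. -/
def Ptilde : Matrix (Fin d) (Fin d) ℝ := μ.Pbar - Matrix.of fun _ _ => (1 : ℝ)

/-- The unbiased diagonal sketch `C` associated with a realization `S` of the sampling. -/
def sketch (S : Finset (Fin d)) : Matrix (Fin d) (Fin d) ℝ :=
  Matrix.diagonal fun j => if j ∈ S then (μ.marg j)⁻¹ else 0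

end Sampling

/-- Largest eigenvalue of a symmetric matrix, via the Rayleigh quotient. -/
def lambdaMax {d : ℕ} (M : Matrix (Fin d) (Fin d) ℝ) : ℝ :=
  sSup {r : ℝ | ∃ v : Fin d → ℝ, v ⬝ᵥ v = 1 ∧ r = v ⬝ᵥ M.mulVec v}

/-- Smallest eigenvalue of a symmetric matrix, via the Rayleigh quotient. -/
def lambdaMin {d : ℕ} (M : Matrix (Fin d) (Fin d) ℝ) : ℝ :=
  sInf {r : ℝ | ∃ v : Fin d → ℝ, v ⬝ᵥ v = 1 ∧ r = v ⬝ᵥ M.mulVec v}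

/-- `Mdag` is the Moore–Penrose pseudoinverse of `M`. -/
def IsMoorePenrose {m n : Type*} [Fintype m] [Fintype n]
    (M : Matrix m n ℝ) (Mdag : Matrix n m ℝ) : Prop :=
  M * Mdag * M = M ∧ Mdag * M * Mdag = Mdag ∧
    (M * Mdag)ᵀ = M * Mdag ∧ (Mdag * M)ᵀ = Mdag * M

/-- Vectors in `ℝ^d` with the Euclidean inner product. -/
abbrev Vec (d : ℕ) := EuclideanSpace ℝ (Fin d)

/-- Action of a matrix on a Euclidean vector. -/
def mact {d e : ℕ} (M : Matrix (Fin e) (Fin d) ℝ) (x : Vec d) : Vec e :=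
  Matrix.toEuclideanLin M x

/-- Quadratic form `xᵀ M x`, i.e. the squared `M`-seminorm `‖x‖²_M`. -/
def quad {d : ℕ} (M : Matrix (Fin d) (Fin d) ℝ) (x : Vec d) : ℝ := ⟪x, mact M x⟫

/-- `f` is `M`-smooth: `f x ≤ f y + ⟨∇f(y), x−y⟩ + ½ (x−y)ᵀ M (x−y)` for all `x, y`. -/
def MSmooth {d : ℕ} (f : Vec d → ℝ) (M : Matrix (Fin d) (Fin d) ℝ) : Prop :=
  ∀ x y : Vec d, f x ≤ f y + ⟪gradient f y, x - y⟫ + (1 / 2) * quad M (x - y)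

/-- Random iterates driven by i.i.d. draws: `traj x0 step k ω` is the `k`-th iterate along
the sample path `ω` of `k` draws. -/
def traj {V Ω : Type*} (x0 : V) (step : V → Ω → V) : ∀ k : ℕ, (Fin k → Ω) → V
  | 0, _ => x0
  | k + 1, ω => step (traj x0 step k fun i => ω i.castSucc) (ω (Fin.last k))

/-- Expectation `E[φ(x^k)]` of a functional of the `k`-th iterate, over `k` i.i.d. draws
with one-step distribution `P`. -/
def trajExp {V Ω : Type*} [Fintype Ω] (P : Ω → ℝ) (x0 : V) (step : V → Ω → V)
    (φ : V → ℝ) (k : ℕ) : ℝ :=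
  ∑ ω : Fin k → Ω, (∏ i, P (ω i)) * φ (traj x0 step k ω)


namespace S3Aux
variable {d : ℕ}


lemma quad_key (c : Finset (Fin d) → ℝ) (b : Finset (Fin d) → Fin d → ℝ)
    (L : Matrix (Fin d) (Fin d) ℝ) (x : Fin d → ℝ) :
    x ⬝ᵥ ((Matrix.of fun j l => ∑ S : Finset (Fin d), c S * (b S j * b S l)) ⊙ L) *ᵥ x
      = ∑ S : Finset (Fin d), c S * ((fun j => b S j * x j) ⬝ᵥ L *ᵥ (fun j => b S j * x j)) := by
  simp only [dotProduct, mulVec, hadamard_apply, Matrix.of_apply, Finset.sum_mul,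
    Finset.mul_sum]
  calc ∑ j : Fin d, ∑ l : Fin d, ∑ S : Finset (Fin d),
        x j * (c S * (b S j * b S l) * L j l * x l)
      = ∑ j : Fin d, ∑ S : Finset (Fin d), ∑ l : Fin d,
        x j * (c S * (b S j * b S l) * L j l * x l) :=
        Finset.sum_congr rfl fun j _ => Finset.sum_comm
    _ = ∑ S : Finset (Fin d), ∑ j : Fin d, ∑ l : Fin d,
        x j * (c S * (b S j * b S l) * L j l * x l) := Finset.sum_comm
    _ = _ := Finset.sum_congr rfl fun S _ => Finset.sum_congr rfl fun j _ =>
        Finset.sum_congr rfl fun l _ => by ring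

lemma rq_bdd (M : Matrix (Fin d) (Fin d) ℝ) :
    BddAbove {r : ℝ | ∃ v : Fin d → ℝ, v ⬝ᵥ v = 1 ∧ r = v ⬝ᵥ M.mulVec v} := by
  refine ⟨∑ j, ∑ l, |M j l|, ?_⟩
  rintro r ⟨v, hv, rfl⟩
  have habs : ∀ j, |v j| ≤ 1 := by
    intro j
    rw [abs_le_one_iff_mul_self_le_one]
    rw [← hv]
    exact Finset.single_le_sum (f := fun i => v i * v i)
      (fun i _ => mul_self_nonneg _) (Finset.mem_univ j)
  simp only [dotProduct, mulVec, Finset.mul_sum]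
  refine Finset.sum_le_sum fun j _ => Finset.sum_le_sum fun l _ => ?_
  calc v j * (M j l * v l) ≤ |v j * (M j l * v l)| := le_abs_self _
    _ = |v j| * |M j l| * |v l| := by rw [abs_mul, abs_mul]; ring
    _ ≤ 1 * |M j l| * 1 := by
        have := abs_nonneg (M j l)
        have h1 := habs j; have h2 := habs l
        nlinarith [abs_nonneg (v j), abs_nonneg (v l), mul_nonneg (abs_nonneg (v j)) (abs_nonneg (M j l))]
    _ = |M j l| := by ring

lemma rq_nonempty (hd : 0 < d) (M : Matrix (Fin d) (Fin d) ℝ) (v : Fin d → ℝ)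
    (hv : v ⬝ᵥ v = 1) :
    (v ⬝ᵥ M.mulVec v) ∈ {r : ℝ | ∃ v : Fin d → ℝ, v ⬝ᵥ v = 1 ∧ r = v ⬝ᵥ M.mulVec v} :=
  ⟨v, hv, rfl⟩

lemma unit_exists (hd : 0 < d) :
    ∃ v : Fin d → ℝ, v ⬝ᵥ v = 1 := by
  refine ⟨fun i => if i = ⟨0, hd⟩ then 1 else 0, ?_⟩
  simp [dotProduct, ite_and, Finset.sum_ite_eq']



/-- centered indicator vector -/
noncomputable def bvec (μ : Sampling d) (S : Finset (Fin d)) (j : Fin d) : ℝ :=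
  (if j ∈ S then (μ.marg j)⁻¹ else 0) - 1

lemma marg_ne (μ : Sampling d) (j : Fin d) : μ.marg j ≠ 0 :=
  ne_of_gt (μ.margPos j)

lemma Ptilde_eq (μ : Sampling d) :
    μ.Ptilde = Matrix.of fun j l => ∑ S : Finset (Fin d), μ.prob S * (bvec μ S j * bvec μ S l) := by
  ext j l
  have h1 : ∀ k : Fin d, ∑ S : Finset (Fin d),
      μ.prob S * (if k ∈ S then (μ.marg k)⁻¹ else 0) = 1 := by
    intro k
    have : ∀ S : Finset (Fin d), μ.prob S * (if k ∈ S then (μ.marg k)⁻¹ else 0)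
        = (if k ∈ S then μ.prob S else 0) * (μ.marg k)⁻¹ := by
      intro S; split <;> simp
    rw [Finset.sum_congr rfl fun S _ => this S, ← Finset.sum_mul]
    exact mul_inv_cancel₀ (marg_ne μ k)
  have h2 : ∑ S : Finset (Fin d),
      μ.prob S * ((if j ∈ S then (μ.marg j)⁻¹ else 0) * (if l ∈ S then (μ.marg l)⁻¹ else 0))
      = μ.probMatrix j l * ((μ.marg j)⁻¹ * (μ.marg l)⁻¹) := by
    have : ∀ S : Finset (Fin d), μ.prob S *
        ((if j ∈ S then (μ.marg j)⁻¹ else 0) * (if l ∈ S then (μ.marg l)⁻¹ else 0))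
        = (if j ∈ S ∧ l ∈ S then μ.prob S else 0) * ((μ.marg j)⁻¹ * (μ.marg l)⁻¹) := by
      intro S
      by_cases hj : j ∈ S <;> by_cases hl : l ∈ S <;> simp [hj, hl]
    rw [Finset.sum_congr rfl fun S _ => this S, ← Finset.sum_mul]
    rfl
  have expand : ∑ S : Finset (Fin d), μ.prob S * (bvec μ S j * bvec μ S l)
      = (∑ S : Finset (Fin d), μ.prob S *
          ((if j ∈ S then (μ.marg j)⁻¹ else 0) * (if l ∈ S then (μ.marg l)⁻¹ else 0)))
        - (∑ S : Finset (Fin d), μ.prob S * (if j ∈ S then (μ.marg j)⁻¹ else 0))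
        - (∑ S : Finset (Fin d), μ.prob S * (if l ∈ S then (μ.marg l)⁻¹ else 0))
        + ∑ S : Finset (Fin d), μ.prob S := by
    rw [← Finset.sum_sub_distrib, ← Finset.sum_sub_distrib, ← Finset.sum_add_distrib]
    refine Finset.sum_congr rfl fun S _ => ?_
    unfold bvec; ring
  simp only [Matrix.of_apply]
  rw [expand, h1 j, h1 l, h2, μ.total]
  simp only [Sampling.Ptilde, Sampling.Pbar, Matrix.sub_apply, Matrix.of_apply]
  rw [div_eq_mul_inv, mul_inv]
  ring


end S3Aux

/-- for symmetric PSD `L`, `P̃ ∘ L` is PSD (equivalently `P̄ ∘ L ⪰ L`),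
and `λmax(L) ≤ λmax(P̄ ∘ L) ≤ λmax(L) + λmax(P̃ ∘ L)`. -/
theorem statement3 {d : ℕ} (μ : Sampling d) (L : Matrix (Fin d) (Fin d) ℝ)
    (hL : L.PosSemidef) :
    (Matrix.hadamard μ.Ptilde L).PosSemidef ∧
    (Matrix.hadamard μ.Pbar L - L).PosSemidef ∧
    lambdaMax L ≤ lambdaMax (Matrix.hadamard μ.Pbar L) ∧
    lambdaMax (Matrix.hadamard μ.Pbar L)
      ≤ lambdaMax L + lambdaMax (Matrix.hadamard μ.Ptilde L) := by
  classical
  have hLsym : ∀ a b : Fin d, L b a = L a b := fun a b => by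
    have := congrFun (congrFun hL.1 a) b
    simpa [Matrix.conjTranspose_apply] using this
  have hTpsd : (Matrix.hadamard μ.Ptilde L).PosSemidef := by
    refine Matrix.PosSemidef.of_dotProduct_mulVec_nonneg ?_ ?_
    · ext a b
      simp only [Matrix.conjTranspose_apply, Matrix.hadamard_apply, star_trivial]
      rw [hLsym b a, S3Aux.Ptilde_eq μ]
      simp only [Matrix.of_apply]
      congr 1
      exact Finset.sum_congr rfl fun S _ => by ring
    · intro x
      rw [star_trivial, S3Aux.Ptilde_eq μ, S3Aux.quad_key]
      refine Finset.sum_nonneg fun S _ => mul_nonneg (μ.nonneg S) ?_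
      have := hL.dotProduct_mulVec_nonneg fun j => S3Aux.bvec μ S j * x j
      rwa [star_trivial] at this
  have hEq : Matrix.hadamard μ.Pbar L - L = Matrix.hadamard μ.Ptilde L := by
    ext a b
    simp only [Matrix.sub_apply, Matrix.hadamard_apply, Sampling.Ptilde, Matrix.of_apply]
    ring
  have hPsd2 : (Matrix.hadamard μ.Pbar L - L).PosSemidef := hEq ▸ hTpsd
  refine ⟨hTpsd, hPsd2, ?_, ?_⟩
  · -- λmax L ≤ λmax (P̄ ∘ L)
    rcases Nat.eq_zero_or_pos d with hd | hd
    · subst hd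
      have : ∀ M : Matrix (Fin 0) (Fin 0) ℝ, lambdaMax M = 0 := by
        intro M
        unfold lambdaMax
        rw [show {r : ℝ | ∃ v : Fin 0 → ℝ, v ⬝ᵥ v = 1 ∧ r = v ⬝ᵥ M.mulVec v} = ∅ from by
          ext r; simp [dotProduct]]
        exact Real.sSup_empty
      rw [this, this]
    · obtain ⟨v0, hv0⟩ := S3Aux.unit_exists hd
      refine csSup_le ⟨_, v0, hv0, rfl⟩ ?_
      rintro r ⟨v, hv, rfl⟩
      have h0 : 0 ≤ v ⬝ᵥ (Matrix.hadamard μ.Pbar L - L).mulVec v := by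
        have := hPsd2.dotProduct_mulVec_nonneg v; rwa [star_trivial] at this
      rw [Matrix.sub_mulVec, dotProduct_sub] at h0
      have hle : v ⬝ᵥ L.mulVec v ≤ v ⬝ᵥ (Matrix.hadamard μ.Pbar L).mulVec v := by linarith
      exact hle.trans (le_csSup (S3Aux.rq_bdd _) ⟨v, hv, rfl⟩)
  · rcases Nat.eq_zero_or_pos d with hd | hd
    · subst hd
      have : ∀ M : Matrix (Fin 0) (Fin 0) ℝ, lambdaMax M = 0 := by
        intro M
        unfold lambdaMax
        rw [show {r : ℝ | ∃ v : Fin 0 → ℝ, v ⬝ᵥ v = 1 ∧ r = v ⬝ᵥ M.mulVec v} = ∅ from by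
          ext r; simp [dotProduct]]
        exact Real.sSup_empty
      rw [this, this, this]
      norm_num
    · obtain ⟨v0, hv0⟩ := S3Aux.unit_exists hd
      refine csSup_le ⟨_, v0, hv0, rfl⟩ ?_
      rintro r ⟨v, hv, rfl⟩
      have hmat : Matrix.hadamard μ.Pbar L = L + Matrix.hadamard μ.Ptilde L := by
        rw [← hEq]; abel
      have hsplit : v ⬝ᵥ (Matrix.hadamard μ.Pbar L).mulVec v
          = v ⬝ᵥ L.mulVec v + v ⬝ᵥ (Matrix.hadamard μ.Ptilde L).mulVec v := by
        rw [hmat, Matrix.add_mulVec, dotProduct_add]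
      rw [hsplit]
      exact add_le_add (le_csSup (S3Aux.rq_bdd _) ⟨v, hv, rfl⟩)
        (le_csSup (S3Aux.rq_bdd _) ⟨v, hv, rfl⟩)

end
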